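/- Let Φ be a t-uniform purified code state, e ∈ {1,…,n}, and T ⊆ {1,…,n}∖{e} with |T| = t. Adjoin two ancilla qudits a and b, each of dimension Q, initialized in the basis state e_0. Then there exists a unitary V acting only on the qudits in T together with the ancillas a and b such that V(Φ ⊗ (e_0)_a ⊗ (e_0)_b) = Φ̃ ⊗ ω, where Φ̃ is the state with the same amplitudes as Φ but with ancilla register a playing the role of the e-th qudit (all other registers unchanged), and ω = Q^{−1/2} Σ_{m=0}^{Q−1} e_m ⊗ e_m is a maximally entangled state on the pair (qudit e, ancilla b). In particular, the erasure of any single node of an [[n, 2t−n]]_Q quantum MDS code can be corrected by a replacement node communicating with any t of the remaining n−1 nodes (Lemma 3.2). -/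

import Mathlib

open scoped BigOperators

noncomputable section

/-- Combine an assignment on `A` with an assignment on the complement of `A`
into a full computational-basis string. -/
def mergeOn {n Q : ℕ} (A : Finset (Fin n)) (u : {i // i ∈ A} → Fin Q)
    (v : {i // i ∉ A} → Fin Q) : Fin n → Fin Q :=
  fun i => if h : i ∈ A then u ⟨i, h⟩ else v ⟨i, h⟩

/-- Reduced density matrix of a purified code state `Φ` on the qudits in `A`
(the reference register and the qudits outside `A` are traced out). -/
def rdm {Q k n : ℕ} (Φ : (Fin k → Fin Q) → (Fin n → Fin Q) → ℂ)
    (A : Finset (Fin n)) :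
    Matrix ({i // i ∈ A} → Fin Q) ({i // i ∈ A} → Fin Q) ℂ :=
  Matrix.of fun u v => ∑ s : Fin k → Fin Q, ∑ w : {i // i ∉ A} → Fin Q,
    Φ s (mergeOn A u w) * (starRingEnd ℂ) (Φ s (mergeOn A v w))

/-- `Φ` is `t`-uniform: every set of `t` qudits is maximally mixed. -/
def TUniform {Q k n : ℕ} (t : ℕ)
    (Φ : (Fin k → Fin Q) → (Fin n → Fin Q) → ℂ) : Prop :=
  ∀ A : Finset (Fin n), A.card = t →
    rdm Φ A = ((Q : ℂ) ^ t)⁻¹ •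
      (1 : Matrix ({i // i ∈ A} → Fin Q) ({i // i ∈ A} → Fin Q) ℂ)


/-- Replace the coordinates of `w` on the set `T` by the assignment `u`. -/
def setCoords {n Q : ℕ} (T : Finset (Fin n)) (w : Fin n → Fin Q)
    (u : {i // i ∈ T} → Fin Q) : Fin n → Fin Q :=
  fun i => if h : i ∈ T then u ⟨i, h⟩ else w i

-- sum of product of two indicators
lemma sum_ite_ite {α : Type*} [Fintype α] [DecidableEq α] (a b : α) (x y : ℂ) :
    ∑ z : α, (if z = a then x else 0) * (if z = b then y else 0)
      = if a = b then x * y else 0 := by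
  rcases eq_or_ne a b with rfl | hab
  · simp [ite_mul, mul_ite, Finset.sum_ite_eq']
  · rw [if_neg hab]
    apply Finset.sum_eq_zero
    intro z _
    rcases eq_or_ne z a with rfl | hz
    · rw [if_neg hab, mul_zero]
    · rw [if_neg hz, zero_mul]

lemma flip_scaled {m p : Type*} [Fintype m] [Fintype p] [DecidableEq m] [DecidableEq p]
    (e : m ≃ p) (M : Matrix m p ℂ) (c : ℂ) (hc : c ≠ 0)
    (h : M * M.conjTranspose = c • 1) :
    M.conjTranspose * M = c • 1 := by
  have h1 : M * (c⁻¹ • M.conjTranspose) = 1 := by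
    rw [Matrix.mul_smul, h, smul_smul, inv_mul_cancel₀ hc, one_smul]
  have h2 := (Matrix.mul_eq_one_comm_of_equiv e).mp h1
  have h3 : c • ((c⁻¹ • M.conjTranspose) * M) = c • (1 : Matrix p p ℂ) := by rw [h2]
  rwa [Matrix.smul_mul, smul_smul, mul_inv_cancel₀ hc, one_smul] at h3

/-- The flipped consequence of `t`-uniformity: the purified states restricted to the
complement system (reference + qudits off `A`) are orthogonal with norm `Q^{-t/2}`. -/
lemma flipUniform {Q k n : ℕ} (t : ℕ)
    (Φ : (Fin k → Fin Q) → (Fin n → Fin Q) → ℂ)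
    (huniform : TUniform t Φ)
    (A : Finset (Fin n)) (hA : A.card = t) (hQt : ((Q : ℂ) ^ t) ≠ 0)
    (hcard : Fintype.card ((Fin k → Fin Q) × ({i // i ∉ A} → Fin Q))
      = Fintype.card ({i // i ∈ A} → Fin Q))
    (p p' : (Fin k → Fin Q) × ({i // i ∉ A} → Fin Q)) :
    ∑ u : {i // i ∈ A} → Fin Q,
      (starRingEnd ℂ) (Φ p.1 (mergeOn A u p.2)) * Φ p'.1 (mergeOn A u p'.2)
      = ((Q : ℂ) ^ t)⁻¹ * (if p = p' then 1 else 0) := by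
  classical
  set g := (Fintype.equivOfCardEq hcard).symm with hg
  set M : Matrix ({i // i ∈ A} → Fin Q) ({i // i ∈ A} → Fin Q) ℂ :=
    Matrix.of (fun u v => Φ (g v).1 (mergeOn A u (g v).2)) with hM
  have h1 : M * M.conjTranspose = ((Q : ℂ) ^ t)⁻¹ • 1 := by
    have := huniform A hA
    rw [← this]
    ext u v
    rw [Matrix.mul_apply]
    rw [← Equiv.sum_comp (Fintype.equivOfCardEq hcard)
      (fun w => M u w * M.conjTranspose w v)]
    simp only [hM, Matrix.conjTranspose_apply, Matrix.of_apply, hg,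
      Equiv.symm_apply_apply, rdm, Complex.star_def]
    rw [Fintype.sum_prod_type]
  have h2 : M.conjTranspose * M = ((Q : ℂ) ^ t)⁻¹ • 1 :=
    flip_scaled (Equiv.refl _) M _ (inv_ne_zero hQt) h1
  have h3 := congrFun (congrFun h2 (g.symm p)) (g.symm p')
  rw [Matrix.mul_apply] at h3
  simp only [hM, Matrix.conjTranspose_apply, Matrix.of_apply, hg,
    Equiv.apply_symm_apply, Matrix.smul_apply, Matrix.one_apply, Complex.star_def,
    EmbeddingLike.apply_eq_iff_eq, smul_eq_mul, mul_ite, mul_one, mul_zero] at h3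
  simpa [mul_ite] using h3

lemma sum_mul_ind {α : Type*} [Fintype α] [DecidableEq α] (a b : α) (x y : ℂ) :
    ∑ z : α, (x * if a = z then 1 else 0) * (y * if b = z then 1 else 0)
      = (x * y) * if a = b then 1 else 0 := by
  rcases eq_or_ne a b with rfl | hab
  · rw [if_pos rfl, mul_one, Finset.sum_eq_single a]
    · simp
    · intro z _ hz
      rw [if_neg (fun h => hz h.symm), mul_zero, zero_mul]
    · simp
  · rw [if_neg hab, mul_zero]
    apply Finset.sum_eq_zero
    intro zz _
    rcases eq_or_ne a zz with rfl | h2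
    · rw [if_neg (fun h : b = a => hab h.symm), mul_zero, mul_zero]
    · rw [if_neg h2, mul_zero, zero_mul]

lemma euclid_sum_apply {α ι : Type*} [Fintype ι] (s : Finset α)
    (f : α → EuclideanSpace ℂ ι) (r : ι) :
    (∑ a ∈ s, f a) r = ∑ a ∈ s, f a r := by
  classical
  induction s using Finset.induction with
  | empty => rfl
  | insert _ _ h ih => rw [Finset.sum_insert h, Finset.sum_insert h, ← ih]; rfl

/-- Lemma 3.2.  Erasure correction from any `t` helper nodes: there is a
unitary `V` acting only on the qudits in `T` together with two ancilla qudits `a`, `b`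
(initialized in `e_0 ⊗ e_0`) which maps `Φ ⊗ e_0 ⊗ e_0` to `Φ̃ ⊗ ω`, where `Φ̃` is `Φ` with
the ancilla `a` playing the role of the `e`-th qudit and `ω` is a maximally entangled state
on (qudit `e`, ancilla `b`).  The left-hand side below is the amplitude of
`V (Φ ⊗ e_0 ⊗ e_0)` at the computational-basis point `(s, w, xa, xb)`, where `V` acts only on
the local registers `(T, a, b)`. -/
theorem stmt_4 (Q t n : ℕ) (hQ : 2 ≤ Q) (ht : 1 < t) (htn : t < n) (hn : n ≤ 2 * t)
    (k : ℕ) (hk : k = 2 * t - n)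
    (Φ : (Fin k → Fin Q) → (Fin n → Fin Q) → ℂ)
    (hnorm : ∑ s : Fin k → Fin Q, ∑ w : Fin n → Fin Q,
      Φ s w * (starRingEnd ℂ) (Φ s w) = 1)
    (huniform : TUniform t Φ)
    (e : Fin n) (T : Finset (Fin n)) (hT : T.card = t) (heT : e ∉ T) :
    ∃ V : Matrix (({i // i ∈ T} → Fin Q) × Fin Q × Fin Q)
                 (({i // i ∈ T} → Fin Q) × Fin Q × Fin Q) ℂ,
      V ∈ Matrix.unitaryGroup (({i // i ∈ T} → Fin Q) × Fin Q × Fin Q) ℂ ∧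
      ∀ (s : Fin k → Fin Q) (w : Fin n → Fin Q) (xa xb : Fin Q),
        (∑ u : {i // i ∈ T} → Fin Q, ∑ ya : Fin Q, ∑ yb : Fin Q,
            V ((fun i => w i.1), xa, xb) (u, ya, yb) *
              (Φ s (setCoords T w u) *
                (if ya = (⟨0, by omega⟩ : Fin Q) then 1 else 0) *
                (if yb = (⟨0, by omega⟩ : Fin Q) then 1 else 0)))
          = Φ s (Function.update w e xa) *
              ((Real.sqrt (Q : ℝ) : ℂ)⁻¹ * (if w e = xb then 1 else 0)) := by
  classical
  have hQ0 : 0 < Q := by omega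
  set z : Fin Q := ⟨0, by omega⟩ with hz
  have hQC : (Q : ℂ) ≠ 0 := by
    exact_mod_cast Nat.cast_ne_zero.mpr hQ0.ne'
  have hQt : ((Q : ℂ) ^ t) ≠ 0 := pow_ne_zero _ hQC
  -- cardinalities
  have cardlem : ∀ B : Finset (Fin n), B.card = t →
      Fintype.card ((Fin k → Fin Q) × ({i // i ∉ B} → Fin Q))
        = Fintype.card ({i // i ∈ B} → Fin Q) := by
    intro B hB
    simp only [Fintype.card_prod, Fintype.card_fun, Fintype.card_fin,
      Fintype.card_subtype_compl, Fintype.card_coe, hB, ← pow_add]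
    congr 1
    omega
  set g := Fintype.equivOfCardEq (cardlem T hT) with hgdef
  -- scalars
  set c : ℂ := ((Real.sqrt ((Q : ℝ) ^ t) : ℝ) : ℂ) with hc
  have hcconj : (starRingEnd ℂ) c = c := by rw [hc, Complex.conj_ofReal]
  have hcc : c * c = (Q : ℂ) ^ t := by
    rw [hc, ← Complex.ofReal_mul,
      Real.mul_self_sqrt (by positivity)]
    push_cast
    ring
  have hcne : c ≠ 0 := by
    intro h
    rw [h, zero_mul] at hcc
    exact hQt hcc.symm
  set sQ : ℂ := ((Real.sqrt (Q : ℝ) : ℝ) : ℂ) with hsQ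
  have hsQconj : (starRingEnd ℂ) sQ⁻¹ = sQ⁻¹ := by
    rw [hsQ, ← Complex.ofReal_inv, Complex.conj_ofReal]
  have hsQQ : sQ * sQ = (Q : ℂ) := by
    rw [hsQ, ← Complex.ofReal_mul, Real.mul_self_sqrt (by positivity)]
    norm_cast
  have hsQne : sQ ≠ 0 := by
    intro h
    rw [h, zero_mul] at hsQQ
    exact hQC hsQQ.symm
  -- the input family
  set uIn : (({i // i ∈ T} → Fin Q) × Fin Q × Fin Q) →
      EuclideanSpace ℂ (({i // i ∈ T} → Fin Q) × Fin Q × Fin Q) :=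
    fun i => WithLp.toLp 2 (fun r => if r.2 = i.2 then
        c * Φ (g.symm i.1).1 (mergeOn T r.1 (g.symm i.1).2) else 0) with huIn
  -- the output family
  set tOut : (({i // i ∈ T} → Fin Q) × Fin Q × Fin Q) →
      EuclideanSpace ℂ (({i // i ∈ T} → Fin Q) × Fin Q × Fin Q) :=
    fun i => WithLp.toLp 2 (fun r => c * (Φ (g.symm i.1).1
        (Function.update (mergeOn T r.1 (g.symm i.1).2) e r.2.1)
      * sQ⁻¹ * (if (g.symm i.1).2 ⟨e, heT⟩ = r.2.2 then 1 else 0))) with htOut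
  -- input orthonormality
  have honIn : Orthonormal ℂ uIn := by
    rw [orthonormal_iff_ite]
    intro i j
    rw [PiLp.inner_apply]
    simp only [RCLike.inner_apply']
    rw [Fintype.sum_prod_type]
    by_cases h2 : i.2 = j.2
    · have hterm : ∀ v : {i // i ∈ T} → Fin Q,
          (∑ anc : Fin Q × Fin Q,
            (starRingEnd ℂ) (uIn i (v, anc)) * uIn j (v, anc))
          = (c * c) * ((starRingEnd ℂ)
              (Φ (g.symm i.1).1 (mergeOn T v (g.symm i.1).2)) *
              Φ (g.symm j.1).1 (mergeOn T v (g.symm j.1).2)) := by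
        intro v
        rw [Finset.sum_eq_single i.2]
        · simp only [huIn, if_pos rfl]
          rw [if_pos h2]
          rw [if_true, map_mul, hcconj]
          ring
        · intro anc _ hanc
          simp only [huIn]
          rw [if_neg hanc, map_zero, zero_mul]
        · intro h
          exact absurd (Finset.mem_univ _) h
      rw [Finset.sum_congr rfl fun v _ => hterm v, ← Finset.mul_sum]
      rw [flipUniform t Φ huniform T hT hQt (cardlem T hT) (g.symm i.1) (g.symm j.1)]
      simp only [EmbeddingLike.apply_eq_iff_eq]
      by_cases h1 : i.1 = j.1
      · rw [if_pos h1, if_pos (Prod.ext h1 h2), mul_one, hcc,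
          mul_inv_cancel₀ hQt]
      · rw [if_neg h1, if_neg (fun h => h1 (congrArg Prod.fst h)), mul_zero, mul_zero]
    · rw [if_neg (fun h => h2 (congrArg Prod.snd h))]
      apply Finset.sum_eq_zero
      intro v _
      apply Finset.sum_eq_zero
      intro anc _
      simp only [huIn]
      by_cases ha : anc = i.2
      · rw [if_neg (fun hb : anc = j.2 => h2 (ha.symm.trans hb)), mul_zero]
      · rw [if_neg ha, map_zero, zero_mul]
  -- key lemma 2
  have key2 : ∀ (s s' : Fin k → Fin Q) (w' w'' : {i // i ∉ T} → Fin Q),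
      (∑ v : {i // i ∈ T} → Fin Q, ∑ xa : Fin Q,
        (starRingEnd ℂ) (Φ s (Function.update (mergeOn T v w') e xa))
          * Φ s' (Function.update (mergeOn T v w'') e xa))
        = (Q : ℂ) * ((Q : ℂ) ^ t)⁻¹ *
          (if s = s' ∧ (∀ i : {i // i ∉ T}, i.1 ≠ e → w' i = w'' i)
            then 1 else 0) := by
    obtain ⟨q, hq⟩ := Finset.card_pos.mp (show 0 < T.card by rw [hT]; omega)
    have hqe : q ≠ e := fun h => heT (h ▸ hq)
    set A : Finset (Fin n) := insert e (T.erase q) with hA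
    have heA : e ∈ A := Finset.mem_insert_self _ _
    have hqA : q ∉ A := by
      intro h
      rcases Finset.mem_insert.mp h with h' | h'
      · exact hqe h'
      · exact (Finset.mem_erase.mp h').1 rfl
    have hTA : ∀ i, i ∈ T → i ≠ q → i ∈ A := fun i hi hne =>
      Finset.mem_insert_of_mem (Finset.mem_erase.mpr ⟨hne, hi⟩)
    have hAT : ∀ i, i ∈ A → i ≠ e → i ∈ T ∧ i ≠ q := by
      intro i hi hne
      rcases Finset.mem_insert.mp hi with h | h
      · exact absurd h hne
      · exact ⟨(Finset.mem_erase.mp h).2, (Finset.mem_erase.mp h).1⟩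
    have hcardA : A.card = t := by
      rw [hA, Finset.card_insert_of_notMem
        (fun h => heT (Finset.mem_erase.mp h).2),
        Finset.card_erase_of_mem hq, hT]
      omega
    have hnotT : ∀ i : Fin n, i ∉ A → i ≠ q → i ∉ T :=
      fun i hiA hiq hiT => hiA (hTA i hiT hiq)
    intro s s' w' w''
    set zf : Fin Q → ({i // i ∉ T} → Fin Q) → ({i // i ∉ A} → Fin Q) :=
      fun qv ww i => if h : i.1 = q then qv
        else ww ⟨i.1, hnotT i.1 i.2 h⟩ with hzf
    set f : (({i // i ∈ T} → Fin Q) × Fin Q) → (Fin Q × ({i // i ∈ A} → Fin Q)) :=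
      fun p => (p.1 ⟨q, hq⟩, fun i =>
        if h : i.1 = e then p.2 else p.1 ⟨i.1, (hAT i.1 i.2 h).1⟩) with hf
    have hbij : Function.Bijective f := by
      apply Function.bijective_iff_has_inverse.mpr
      refine ⟨fun p => (fun j => if h : j.1 = q then p.1
          else p.2 ⟨j.1, hTA j.1 j.2 h⟩, p.2 ⟨e, heA⟩), ?_, ?_⟩
      · intro p
        refine Prod.ext ?_ ?_
        · funext j
          simp only [hf]
          by_cases hjq : j.1 = q
          · rw [dif_pos hjq]
            exact congrArg p.1 (Subtype.ext hjq.symm)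
          · rw [dif_neg hjq, dif_neg (fun h : (j : Fin n) = e => heT (h ▸ j.2))]
        · simp [hf]
      · intro p
        refine Prod.ext ?_ ?_
        · simp [hf]
        · funext i
          simp only [hf]
          by_cases hie : i.1 = e
          · rw [dif_pos hie]
            exact congrArg p.2 (Subtype.ext hie.symm)
          · rw [dif_neg hie, dif_neg (hAT i.1 i.2 hie).2]
    have hpoint : ∀ (p : ({i // i ∈ T} → Fin Q) × Fin Q)
        (ww : {i // i ∉ T} → Fin Q),
        Function.update (mergeOn T p.1 ww) e p.2
          = mergeOn A (f p).2 (zf (f p).1 ww) := by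
      intro p ww
      funext i
      rw [Function.update_apply]
      by_cases hie : i = e
      · subst hie
        rw [if_pos rfl]
        simp only [mergeOn, hf, hzf]
        rw [dif_pos heA]
        simp
      · rw [if_neg hie]
        simp only [mergeOn, hf, hzf]
        by_cases hiT : i ∈ T
        · rw [dif_pos hiT]
          by_cases hiq : i = q
          · subst hiq
            rw [dif_neg hqA, dif_pos rfl]
          · rw [dif_pos (hTA i hiT hiq), dif_neg hie]
        · have hiA : i ∉ A := fun hiA => hiT (hAT i hiA hie).1
          have hiq : i ≠ q := fun h => hiT (h ▸ hq)
          rw [dif_neg hiT, dif_neg hiA, dif_neg hiq]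
    have step1 : (∑ v : {i // i ∈ T} → Fin Q, ∑ xa : Fin Q,
        (starRingEnd ℂ) (Φ s (Function.update (mergeOn T v w') e xa))
          * Φ s' (Function.update (mergeOn T v w'') e xa))
        = ∑ p2 : Fin Q × ({i // i ∈ A} → Fin Q),
            (starRingEnd ℂ) (Φ s (mergeOn A p2.2 (zf p2.1 w')))
              * Φ s' (mergeOn A p2.2 (zf p2.1 w'')) := by
      calc (∑ v : {i // i ∈ T} → Fin Q, ∑ xa : Fin Q,
            (starRingEnd ℂ) (Φ s (Function.update (mergeOn T v w') e xa))
              * Φ s' (Function.update (mergeOn T v w'') e xa))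
          = ∑ p : (({i // i ∈ T} → Fin Q) × Fin Q),
              (starRingEnd ℂ) (Φ s (Function.update (mergeOn T p.1 w') e p.2))
                * Φ s' (Function.update (mergeOn T p.1 w'') e p.2) :=
            (Fintype.sum_prod_type
              (f := fun p : (({i // i ∈ T} → Fin Q) × Fin Q) =>
                (starRingEnd ℂ) (Φ s (Function.update (mergeOn T p.1 w') e p.2))
                  * Φ s' (Function.update (mergeOn T p.1 w'') e p.2))).symm
        _ = ∑ p2 : Fin Q × ({i // i ∈ A} → Fin Q),
              (starRingEnd ℂ) (Φ s (mergeOn A p2.2 (zf p2.1 w')))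
                * Φ s' (mergeOn A p2.2 (zf p2.1 w'')) :=
            Fintype.sum_bijective f hbij _ _
              (fun p => by rw [hpoint p w', hpoint p w''])
    rw [step1, Fintype.sum_prod_type]
    have step2 : ∀ qv : Fin Q,
        (∑ a : {i // i ∈ A} → Fin Q,
          (starRingEnd ℂ) (Φ s (mergeOn A a (zf qv w')))
            * Φ s' (mergeOn A a (zf qv w'')))
        = ((Q : ℂ) ^ t)⁻¹ *
            (if s = s' ∧ (∀ i : {i // i ∉ T}, i.1 ≠ e → w' i = w'' i)
              then 1 else 0) := by
      intro qv
      rw [flipUniform t Φ huniform A hcardA hQt (cardlem A hcardA)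
        (s, zf qv w') (s', zf qv w'')]
      congr 1
      have hiff : (s, zf qv w') = (s', zf qv w'')
          ↔ (s = s' ∧ (∀ i : {i // i ∉ T}, i.1 ≠ e → w' i = w'' i)) := by
        rw [Prod.ext_iff]
        constructor
        · rintro ⟨h1, h2⟩
          refine ⟨h1, fun i hie => ?_⟩
          have hiA : i.1 ∉ A := by
            intro hiA
            exact i.2 (hAT i.1 hiA hie).1
          have hiq : i.1 ≠ q := fun h => i.2 (h ▸ hq)
          have := congrFun h2 ⟨i.1, hiA⟩
          simp only [hzf] at this
          rw [dif_neg hiq, dif_neg hiq] at this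
          exact this
        · rintro ⟨h1, h2⟩
          refine ⟨h1, ?_⟩
          funext i
          simp only [hzf]
          by_cases hiq : i.1 = q
          · rw [dif_pos hiq, dif_pos hiq]
          · rw [dif_neg hiq, dif_neg hiq]
            exact h2 _ (fun h => i.2 (h ▸ heA))
      by_cases hcond : s = s' ∧ (∀ i : {i // i ∉ T}, i.1 ≠ e → w' i = w'' i)
      · rw [if_pos (hiff.mpr hcond), if_pos hcond]
      · rw [if_neg (fun h => hcond (hiff.mp h)), if_neg hcond]
    rw [Finset.sum_congr rfl fun qv _ => step2 qv, Finset.sum_const,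
      Finset.card_univ, Fintype.card_fin, nsmul_eq_mul, ← mul_assoc]
  -- output orthonormality on S
  set S : Set (({i // i ∈ T} → Fin Q) × Fin Q × Fin Q) :=
    {i | i.2 = (z, z)} with hS
  have honOut : Orthonormal ℂ (S.restrict tOut) := by
    rw [orthonormal_iff_ite]
    rintro ⟨ii, hii⟩ ⟨jj, hjj⟩
    change inner ℂ (tOut ii) (tOut jj) = _
    rw [PiLp.inner_apply]
    simp only [RCLike.inner_apply', htOut]
    rw [Fintype.sum_prod_type]
    set pI := g.symm ii.1 with hpI
    set pJ := g.symm jj.1 with hpJ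
    calc (∑ v : {i // i ∈ T} → Fin Q, ∑ y : Fin Q × Fin Q,
        (starRingEnd ℂ) (c * (Φ pI.1 (Function.update (mergeOn T v pI.2) e y.1) * sQ⁻¹ *
            (if pI.2 ⟨e, heT⟩ = y.2 then 1 else 0)))
        * (c * (Φ pJ.1 (Function.update (mergeOn T v pJ.2) e y.1) * sQ⁻¹ *
            (if pJ.2 ⟨e, heT⟩ = y.2 then 1 else 0))))
        = ∑ v : {i // i ∈ T} → Fin Q, ∑ xa : Fin Q, ∑ xb : Fin Q,
            (starRingEnd ℂ) (c * (Φ pI.1 (Function.update (mergeOn T v pI.2) e xa) * sQ⁻¹ *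
              (if pI.2 ⟨e, heT⟩ = xb then 1 else 0)))
            * (c * (Φ pJ.1 (Function.update (mergeOn T v pJ.2) e xa) * sQ⁻¹ *
              (if pJ.2 ⟨e, heT⟩ = xb then 1 else 0))) :=
          Finset.sum_congr rfl fun v _ => Fintype.sum_prod_type _
      _ = ∑ v : {i // i ∈ T} → Fin Q, ∑ xa : Fin Q,
            ((c * ((starRingEnd ℂ) (Φ pI.1 (Function.update (mergeOn T v pI.2) e xa)) * sQ⁻¹))
              * (c * (Φ pJ.1 (Function.update (mergeOn T v pJ.2) e xa) * sQ⁻¹)))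
            * (if pI.2 ⟨e, heT⟩ = pJ.2 ⟨e, heT⟩ then 1 else 0) := by
          refine Finset.sum_congr rfl fun v _ => Finset.sum_congr rfl fun xa _ => ?_
          rw [← sum_mul_ind (pI.2 ⟨e, heT⟩) (pJ.2 ⟨e, heT⟩)
            (c * ((starRingEnd ℂ) (Φ pI.1 (Function.update (mergeOn T v pI.2) e xa)) * sQ⁻¹))
            (c * (Φ pJ.1 (Function.update (mergeOn T v pJ.2) e xa) * sQ⁻¹))]
          refine Finset.sum_congr rfl fun xb _ => ?_
          rw [map_mul, map_mul, map_mul, hcconj, hsQconj, apply_ite (starRingEnd ℂ),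
            map_one, map_zero]
          ring
      _ = ((c * c) * (sQ⁻¹ * sQ⁻¹) * (if pI.2 ⟨e, heT⟩ = pJ.2 ⟨e, heT⟩ then 1 else 0)) *
            (∑ v : {i // i ∈ T} → Fin Q, ∑ xa : Fin Q,
              (starRingEnd ℂ) (Φ pI.1 (Function.update (mergeOn T v pI.2) e xa))
                * Φ pJ.1 (Function.update (mergeOn T v pJ.2) e xa)) := by
          rw [Finset.mul_sum]
          refine Finset.sum_congr rfl fun v _ => ?_
          rw [Finset.mul_sum]
          refine Finset.sum_congr rfl fun xa _ => ?_
          ring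
      _ = ((c * c) * (sQ⁻¹ * sQ⁻¹) * (if pI.2 ⟨e, heT⟩ = pJ.2 ⟨e, heT⟩ then 1 else 0)) *
            ((Q : ℂ) * ((Q : ℂ) ^ t)⁻¹ *
              (if pI.1 = pJ.1 ∧ (∀ i : {i // i ∉ T}, i.1 ≠ e → pI.2 i = pJ.2 i)
                then 1 else 0)) := by rw [key2]
      _ = if (⟨ii, hii⟩ : S) = ⟨jj, hjj⟩ then 1 else 0 := by
          have hC : ((⟨ii, hii⟩ : S) = ⟨jj, hjj⟩)
              ↔ ((pI.2 ⟨e, heT⟩ = pJ.2 ⟨e, heT⟩) ∧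
                 (pI.1 = pJ.1 ∧ (∀ i : {i // i ∉ T}, i.1 ≠ e → pI.2 i = pJ.2 i))) := by
            constructor
            · intro h
              have hij : ii = jj := Subtype.ext_iff.mp h
              have hp : pI = pJ := by rw [hpI, hpJ, hij]
              rw [hp]
              exact ⟨rfl, rfl, fun _ _ => rfl⟩
            · rintro ⟨h1, h2, h3⟩
              have hp2 : pI.2 = pJ.2 := by
                funext x
                by_cases hx : x.1 = e
                · have hxe : x = ⟨e, heT⟩ := Subtype.ext hx
                  rw [hxe]
                  exact h1
                · exact h3 x hx
              have hp : pI = pJ := Prod.ext h2 hp2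
              have h1' : ii.1 = jj.1 := by
                have hgg := congrArg g hp
                rw [hpI, hpJ, Equiv.apply_symm_apply, Equiv.apply_symm_apply] at hgg
                exact hgg
              have h4 : ii.2 = (z, z) := hii
              have h5 : jj.2 = (z, z) := hjj
              exact Subtype.ext (Prod.ext h1' (h4.trans h5.symm))
          by_cases hcond : (⟨ii, hii⟩ : S) = ⟨jj, hjj⟩
          · rw [if_pos hcond]
            obtain ⟨h1, h23⟩ := hC.mp hcond
            rw [if_pos h1, if_pos h23, mul_one, mul_one, hcc, ← mul_inv, hsQQ]
            field_simp
          · rw [if_neg hcond]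
            by_cases h1 : pI.2 ⟨e, heT⟩ = pJ.2 ⟨e, heT⟩
            · by_cases h23 : pI.1 = pJ.1 ∧
                  (∀ i : {i // i ∉ T}, i.1 ≠ e → pI.2 i = pJ.2 i)
              · exact absurd (hC.mpr ⟨h1, h23⟩) hcond
              · rw [if_neg h23, mul_zero, mul_zero]
            · rw [if_neg h1, mul_zero, zero_mul]
  -- build the bases
  have hdim : Module.finrank ℂ
      (EuclideanSpace ℂ (({i // i ∈ T} → Fin Q) × Fin Q × Fin Q))
      = Fintype.card (({i // i ∈ T} → Fin Q) × Fin Q × Fin Q) :=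
    finrank_euclideanSpace
  obtain ⟨bIn, hbIn⟩ :=
    (honIn.comp _ Subtype.val_injective :
      Orthonormal ℂ (Set.univ.restrict uIn)).exists_orthonormalBasis_extension_of_card_eq hdim
  obtain ⟨bOut, hbOut⟩ := honOut.exists_orthonormalBasis_extension_of_card_eq hdim
  set U := bIn.repr.trans bOut.repr.symm with hUdef
  have hU : ∀ i, U (bIn i) = bOut i := by
    intro i
    rw [hUdef]
    simp [OrthonormalBasis.repr_self]
  set V : Matrix (({i // i ∈ T} → Fin Q) × Fin Q × Fin Q)
      (({i // i ∈ T} → Fin Q) × Fin Q × Fin Q) ℂ :=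
    fun r cc => U (EuclideanSpace.single cc 1) r with hV
  refine ⟨V, ?_, ?_⟩
  · -- unitarity
    rw [Matrix.mem_unitaryGroup_iff']
    ext i j
    rw [Matrix.mul_apply, Matrix.one_apply]
    have h1 : ∀ r, (star V) i r * V r j
        = (starRingEnd ℂ) (U (EuclideanSpace.single i 1) r)
          * (U (EuclideanSpace.single j 1) r) := by
      intro r
      rw [Matrix.star_apply, hV]
      rfl
    rw [Finset.sum_congr rfl (fun r _ => h1 r)]
    have h2 := U.inner_map_map (EuclideanSpace.single i (1:ℂ))
      (EuclideanSpace.single j (1:ℂ))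
    rw [PiLp.inner_apply] at h2
    simp only [RCLike.inner_apply'] at h2
    rw [h2, EuclideanSpace.inner_single_left, map_one, one_mul,
      EuclideanSpace.single_apply]
  · -- the amplitude identity
    intro s w xa xb
    set w' : {i // i ∉ T} → Fin Q := fun i => w i.1 with hw'
    set i₀ : (({i // i ∈ T} → Fin Q) × Fin Q × Fin Q) := (g (s, w'), z, z) with hi₀
    have hcollapse : ∀ u : {i // i ∈ T} → Fin Q,
        (∑ ya : Fin Q, ∑ yb : Fin Q,
          V ((fun i => w i.1), xa, xb) (u, ya, yb) *
            (Φ s (setCoords T w u) *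
              (if ya = z then 1 else 0) * (if yb = z then 1 else 0)))
        = V ((fun i => w i.1), xa, xb) (u, z, z) * Φ s (setCoords T w u) := by
      intro u
      rw [Finset.sum_eq_single z]
      · rw [Finset.sum_eq_single z]
        · rw [if_pos rfl, mul_one, mul_one]
        · intro yb _ hyb
          rw [if_neg hyb, mul_zero, mul_zero]
        · intro h
          exact absurd (Finset.mem_univ _) h
      · intro ya _ hya
        apply Finset.sum_eq_zero
        intro yb _
        rw [if_neg hya, mul_zero, zero_mul, mul_zero]
      · intro h
        exact absurd (Finset.mem_univ _) h
    rw [Finset.sum_congr rfl fun u _ => hcollapse u]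
    have hmerge1 : ∀ v : {i // i ∈ T} → Fin Q,
        mergeOn T v w' = setCoords T w v := by
      intro v
      funext i1
      by_cases h : i1 ∈ T <;> simp [mergeOn, setCoords, h, hw']
    have hmerge2 : mergeOn T (fun i => w i.1) w' = w := by
      funext i1
      by_cases h : i1 ∈ T <;> simp [mergeOn, h, hw']
    have hbin : bIn i₀ = uIn i₀ := hbIn i₀ (Set.mem_univ _)
    have hbout : bOut i₀ = tOut i₀ := hbOut i₀ (show i₀.2 = (z, z) from rfl)
    have hexpand : (c⁻¹ : ℂ) • uIn i₀ = ∑ u : {i // i ∈ T} → Fin Q,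
        (Φ s (setCoords T w u)) • EuclideanSpace.single (u, z, z) (1 : ℂ) := by
      ext r
      rw [euclid_sum_apply]
      have hL : ((c⁻¹ : ℂ) • uIn i₀) r = c⁻¹ * uIn i₀ r := rfl
      rw [hL]
      simp only [huIn, hi₀, Equiv.symm_apply_apply]
      have hR : ∀ u : {i // i ∈ T} → Fin Q,
          ((Φ s (setCoords T w u)) • EuclideanSpace.single (u, z, z) (1 : ℂ)) r
            = Φ s (setCoords T w u) * (if r = (u, z, z) then 1 else 0) := by
        intro u
        have : ((Φ s (setCoords T w u)) • EuclideanSpace.single (u, z, z) (1 : ℂ)) r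
            = Φ s (setCoords T w u) * (EuclideanSpace.single (u, z, z) (1 : ℂ)) r := rfl
        rw [this, EuclideanSpace.single_apply]
      rw [Finset.sum_congr rfl fun u _ => hR u]
      by_cases hr : r.2 = (z, z)
      · have hre : r = (r.1, z, z) := by
          rw [← hr]
        rw [if_pos hr, Finset.sum_eq_single r.1]
        · rw [if_pos hre, mul_one, hmerge1, inv_mul_cancel_left₀ hcne]
        · intro u _ hu
          rw [if_neg (fun h => hu (congrArg Prod.fst h).symm), mul_zero]
        · intro h
          exact absurd (Finset.mem_univ _) h
      · rw [if_neg hr, mul_zero]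
        symm
        apply Finset.sum_eq_zero
        intro u _
        rw [if_neg (fun h => hr (congrArg Prod.snd h)), mul_zero]
    have hUeval : U ((c⁻¹ : ℂ) • uIn i₀) = (c⁻¹ : ℂ) • tOut i₀ := by
      rw [← hbin, map_smul, hU, hbout]
    calc (∑ u : {i // i ∈ T} → Fin Q,
          V ((fun i => w i.1), xa, xb) (u, z, z) * Φ s (setCoords T w u))
        = ∑ u : {i // i ∈ T} → Fin Q,
            Φ s (setCoords T w u) *
              (U (EuclideanSpace.single (u, z, z) (1 : ℂ)))
                ((fun i => w i.1), xa, xb) :=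
          Finset.sum_congr rfl fun u _ => mul_comm _ _
      _ = (U ((c⁻¹ : ℂ) • uIn i₀)) ((fun i => w i.1), xa, xb) := by
          rw [hexpand, map_sum, euclid_sum_apply]
          refine Finset.sum_congr rfl fun u _ => ?_
          rw [map_smul]
          rfl
      _ = ((c⁻¹ : ℂ) • tOut i₀) ((fun i => w i.1), xa, xb) := by rw [hUeval]
      _ = Φ s (Function.update w e xa) *
            (sQ⁻¹ * (if w e = xb then 1 else 0)) := by
          have hL : ((c⁻¹ : ℂ) • tOut i₀) ((fun i => w i.1), xa, xb)
              = c⁻¹ * tOut i₀ ((fun i => w i.1), xa, xb) := rfl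
          rw [hL]
          simp only [htOut, hi₀, Equiv.symm_apply_apply]
          rw [hmerge2, inv_mul_cancel_left₀ hcne, mul_assoc]
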